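/- Let n ≥ 1, let X and Y be objects of D(𝒜) concentrated in [-n+1, 0], let f : X → Y be a morphism, and let f = m ∘ e (with e : X → Z, m : Z → Y) be a [1,n]-factorization of f. Then: (a) H^{-n+1}(f) is a monomorphism in 𝒜 if and only if e is an isomorphism in D(𝒜); (b) H^{-n+1}(f) is an epimorphism in 𝒜 and H^i(f) is an isomorphism in 𝒜 for all i ≥ -n+2 if and only if m is an isomorphism in D(𝒜). -/

import Mathlib

open CategoryTheory CategoryTheory.Limits CategoryTheory.Pretriangulated ZeroObject

universe w v u

variable {𝒜 : Type u} [Category.{v} 𝒜] [Abelian 𝒜] [HasDerivedCategory.{w} 𝒜]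

/-- An object of the derived category is concentrated in degrees `[-n+1, 0]` if its
homology vanishes in degrees `< -n+1` and `> 0`. -/
def Concentrated (n : ℤ) (X : DerivedCategory 𝒜) : Prop :=
  ∀ i : ℤ, (i < -n + 1 ∨ 0 < i) → IsZero ((DerivedCategory.homologyFunctor 𝒜 i).obj X)

lemma isIso_of_isZero {C : Type*} [Category C] [HasZeroMorphisms C] {A B : C}
    (hA : IsZero A) (hB : IsZero B) (g : A ⟶ B) : IsIso g :=
  ⟨0, hA.eq_of_src _ _, hB.eq_of_tgt _ _⟩

lemma isZero_of_homology (Z : DerivedCategory 𝒜)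
    (h : ∀ i : ℤ, IsZero ((DerivedCategory.homologyFunctor 𝒜 i).obj Z)) : IsZero Z := by
  haveI : (DerivedCategory.Q (C := 𝒜)).EssSurj :=
    Localization.essSurj _ (HomologicalComplex.quasiIso 𝒜 (ComplexShape.up ℤ))
  obtain ⟨K, ⟨e⟩⟩ : ∃ K, Nonempty (DerivedCategory.Q.obj K ≅ Z) :=
    ⟨_, ⟨DerivedCategory.Q.objObjPreimageIso Z⟩⟩
  have hK : ∀ i, K.ExactAt i := fun i => by
    rw [HomologicalComplex.exactAt_iff_isZero_homology]
    exact IsZero.of_iso (IsZero.of_iso (h i)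
      ((DerivedCategory.homologyFunctor 𝒜 i).mapIso e))
      ((DerivedCategory.homologyFunctorFactors 𝒜 i).app K).symm
  have h0 : ∀ i, (0 : CochainComplex 𝒜 ℤ).ExactAt i := fun i => by
    rw [HomologicalComplex.exactAt_iff_isZero_homology]
    exact (HomologicalComplex.homologyFunctor 𝒜 _ i).map_isZero (isZero_zero _)
  haveI : QuasiIso (0 : K ⟶ 0) := ⟨fun i => (quasiIsoAt_iff_exactAt _ i (hK i)).2 (h0 i)⟩
  exact IsZero.of_iso (IsZero.of_iso (DerivedCategory.Q.map_isZero (isZero_zero _))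
    (asIso (DerivedCategory.Q.map (0 : K ⟶ 0)))) e.symm

lemma isIso_of_homology {X Y : DerivedCategory 𝒜} (f : X ⟶ Y)
    (h : ∀ i : ℤ, IsIso ((DerivedCategory.homologyFunctor 𝒜 i).map f)) : IsIso f := by
  obtain ⟨W, g, k, hT⟩ := Pretriangulated.distinguished_cocone_triangle f
  refine (Triangle.isZero₃_iff_isIso₁ _ hT).1 (isZero_of_homology _ fun i => ?_)
  rw [(DerivedCategory.HomologySequence.exact₃ _ hT i (i + 1) rfl).isZero_X₂_iff]
  haveI := h i
  haveI := h (i + 1)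
  exact ⟨(DerivedCategory.HomologySequence.epi_homologyMap_mor₁_iff _ hT i).1
      (by change Epi ((DerivedCategory.homologyFunctor 𝒜 i).map f); infer_instance),
    (DerivedCategory.HomologySequence.mono_homologyMap_mor₁_iff _ hT i (i + 1) rfl).1
      (by change Mono ((DerivedCategory.homologyFunctor 𝒜 (i + 1)).map f); infer_instance)⟩

theorem stmt_13 (n : ℤ) (hn : 1 ≤ n) (X Y Z : DerivedCategory 𝒜)
    (hX : Concentrated n X) (hY : Concentrated n Y) (hZ : Concentrated n Z)
    (f : X ⟶ Y) (e : X ⟶ Z) (m : Z ⟶ Y) (hfac : e ≫ m = f)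
    (hm : Mono ((DerivedCategory.homologyFunctor 𝒜 (-n + 1)).map m))
    (he : Epi ((DerivedCategory.homologyFunctor 𝒜 (-n + 1)).map e))
    (he' : ∀ i : ℤ, -n + 2 ≤ i → IsIso ((DerivedCategory.homologyFunctor 𝒜 i).map e)) :
    (Mono ((DerivedCategory.homologyFunctor 𝒜 (-n + 1)).map f) ↔ IsIso e) ∧
    ((Epi ((DerivedCategory.homologyFunctor 𝒜 (-n + 1)).map f) ∧
      ∀ i : ℤ, -n + 2 ≤ i → IsIso ((DerivedCategory.homologyFunctor 𝒜 i).map f)) ↔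
        IsIso m) := by
  have hcomp : ∀ i : ℤ, (DerivedCategory.homologyFunctor 𝒜 i).map e ≫
      (DerivedCategory.homologyFunctor 𝒜 i).map m =
      (DerivedCategory.homologyFunctor 𝒜 i).map f := fun i => by
    rw [← Functor.map_comp, hfac]
  constructor
  · constructor
    · intro hf
      apply isIso_of_homology
      intro i
      by_cases hi : -n + 2 ≤ i
      · exact he' i hi
      · push_neg at hi
        rcases (show i < -n + 1 ∨ i = -n + 1 by omega) with hi' | hi'
        · exact isIso_of_isZero (hX i (Or.inl hi')) (hZ i (Or.inl hi')) _
        · subst hi'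
          have hmono : Mono ((DerivedCategory.homologyFunctor 𝒜 (-n + 1)).map e ≫
              (DerivedCategory.homologyFunctor 𝒜 (-n + 1)).map m) := by
            rw [hcomp]; exact hf
          haveI := mono_of_mono ((DerivedCategory.homologyFunctor 𝒜 (-n + 1)).map e)
            ((DerivedCategory.homologyFunctor 𝒜 (-n + 1)).map m)
          exact isIso_of_mono_of_epi _
    · intro hiso
      rw [← hcomp]
      haveI : IsIso ((DerivedCategory.homologyFunctor 𝒜 (-n + 1)).map e) := inferInstance
      exact mono_comp _ _
  · constructor
    · rintro ⟨hepi, hiso⟩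
      apply isIso_of_homology
      intro i
      by_cases hi : -n + 2 ≤ i
      · haveI := he' i hi
        haveI := hiso i hi
        haveI : IsIso ((DerivedCategory.homologyFunctor 𝒜 i).map e ≫
            (DerivedCategory.homologyFunctor 𝒜 i).map m) := by
          rw [hcomp]; infer_instance
        exact IsIso.of_isIso_comp_left ((DerivedCategory.homologyFunctor 𝒜 i).map e)
          ((DerivedCategory.homologyFunctor 𝒜 i).map m)
      · push_neg at hi
        rcases (show i < -n + 1 ∨ i = -n + 1 by omega) with hi' | hi'
        · exact isIso_of_isZero (hZ i (Or.inl hi')) (hY i (Or.inl hi')) _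
        · subst hi'
          have hepi' : Epi ((DerivedCategory.homologyFunctor 𝒜 (-n + 1)).map e ≫
              (DerivedCategory.homologyFunctor 𝒜 (-n + 1)).map m) := by
            rw [hcomp]; exact hepi
          haveI := epi_of_epi ((DerivedCategory.homologyFunctor 𝒜 (-n + 1)).map e)
            ((DerivedCategory.homologyFunctor 𝒜 (-n + 1)).map m)
          exact isIso_of_mono_of_epi _
    · intro hiso
      constructor
      · rw [← hcomp]
        haveI : IsIso ((DerivedCategory.homologyFunctor 𝒜 (-n + 1)).map m) := inferInstance
        exact epi_comp _ _
      · intro i hi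
        haveI := he' i hi
        rw [← hcomp]
        infer_instance
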